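/- Let H be a complex Hilbert space, B a positive compact self-adjoint operator with largest eigenvalue λ₁ = ‖B‖ > 0 and eigenspace M₁ for λ₁, and let U, V be unitary operators with B² = U B U* V B V*. Then for every unit vector x ∈ M₁ one has ‖B V* x‖ = ‖B‖ = ‖B U* x‖, and hence V* x ∈ M₁ and U* x ∈ M₁. -/

import Mathlib

open ContinuousLinearMap
open scoped InnerProductSpace

lemma aux_eq_case {H : Type*} [NormedAddCommGroup H] [InnerProductSpace ℂ H] [CompleteSpace H]
    (B : H →L[ℂ] H) (hBsa : IsSelfAdjoint B) (hBpos : B.IsPositive) (hBn : 0 < ‖B‖)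
    (v : H) (hv : ‖B v‖ = ‖B‖ * ‖v‖) : B v = (‖B‖ : ℂ) • v := by
  have hsym : (B : H →ₗ[ℂ] H).IsSymmetric :=
    (ContinuousLinearMap.isSelfAdjoint_iff_isSymmetric.mp hBsa)
  have h1 : B (B v) = ((‖B‖ : ℂ)^2) • v := by
    have hinner : RCLike.re (⟪B (B v), v⟫_ℂ) = ‖B v‖^2 := by
      have h := hsym (B v) v
      simp only [ContinuousLinearMap.coe_coe] at h
      rw [h, inner_self_eq_norm_sq]
    have hle : ‖B (B v)‖ ≤ ‖B‖ * ‖B v‖ := B.le_opNorm _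
    have hz : ‖B (B v) - ((‖B‖:ℂ)^2) • v‖^2 ≤ 0 := by
      have e := norm_sub_sq (𝕜 := ℂ) (B (B v)) (((‖B‖:ℂ)^2) • v)
      rw [inner_smul_right] at e
      have hre : RCLike.re ((‖B‖:ℂ)^2 * ⟪B (B v), v⟫_ℂ) =
          ‖B‖^2 * RCLike.re (⟪B (B v), v⟫_ℂ) := by
        rw [RCLike.mul_re]
        simp [← Complex.ofReal_pow]
      rw [hre, hinner, hv] at e
      have hn : ‖((‖B‖:ℂ)^2) • v‖ = ‖B‖^2 * ‖v‖ := by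
        rw [norm_smul]; simp [abs_of_nonneg (norm_nonneg B)]
      rw [hn] at e
      have hle2 : ‖B (B v)‖ ≤ ‖B‖^2 * ‖v‖ := by rw [hv] at hle; nlinarith
      nlinarith [norm_nonneg (B (B v)), norm_nonneg v, norm_nonneg B]
    have hzero : ‖B (B v) - ((‖B‖:ℂ)^2) • v‖ = 0 := by
      nlinarith [norm_nonneg (B (B v) - ((‖B‖:ℂ)^2) • v)]
    exact sub_eq_zero.mp (norm_eq_zero.mp hzero)
  set u := B v - (‖B‖:ℂ) • v with hu
  have hBu : B u = (-(‖B‖:ℂ)) • u := by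
    rw [hu, map_sub, map_smul, h1]
    module
  have hpos := hBpos.inner_nonneg_left u
  rw [hBu, inner_smul_left] at hpos
  replace hpos : 0 ≤ RCLike.re ((starRingEnd ℂ) (-(‖B‖:ℂ)) * ⟪u, u⟫_ℂ) := (Complex.le_def.mp hpos).1
  have hthis : RCLike.re ((starRingEnd ℂ) (-(‖B‖:ℂ)) * ⟪u, u⟫_ℂ) = -‖B‖ * ‖u‖^2 := by
    rw [map_neg, Complex.conj_ofReal, RCLike.mul_re]
    simp [inner_self_eq_norm_sq (𝕜 := ℂ)]
    left; rw [← Complex.ofReal_pow, Complex.ofReal_re]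
  rw [hthis] at hpos
  have h3 : ‖u‖ ^ 2 ≤ 0 := by
    by_contra hc
    push_neg at hc
    nlinarith [mul_pos hBn hc]
  have hu0 : ‖u‖ = 0 := by nlinarith [norm_nonneg u]
  exact sub_eq_zero.mp (norm_eq_zero.mp hu0)
theorem stmt14 {H : Type*} [NormedAddCommGroup H] [InnerProductSpace ℂ H] [CompleteSpace H]
    (B U V : H →L[ℂ] H)
    (hBc : IsCompactOperator (⇑B)) (hBsa : IsSelfAdjoint B) (hBpos : B.IsPositive)
    (hBnorm : 0 < ‖B‖)
    (hU : U ∈ unitary (H →L[ℂ] H)) (hV : V ∈ unitary (H →L[ℂ] H))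
    (heq : B * B = U * B * star U * (V * B * star V)) :
    ∀ x : H, ‖x‖ = 1 → x ∈ LinearMap.ker ((B - (‖B‖ : ℂ) • (1 : H →L[ℂ] H) : H →L[ℂ] H) : H →ₗ[ℂ] H) →
      ‖B ((star V) x)‖ = ‖B‖ ∧ ‖B ((star U) x)‖ = ‖B‖ ∧
      (star V) x ∈ LinearMap.ker ((B - (‖B‖ : ℂ) • (1 : H →L[ℂ] H) : H →L[ℂ] H) : H →ₗ[ℂ] H) ∧
      (star U) x ∈ LinearMap.ker ((B - (‖B‖ : ℂ) • (1 : H →L[ℂ] H) : H →L[ℂ] H) : H →ₗ[ℂ] H) := by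
  intro x hx1 hxm
  have hVsV : ∀ z, V ((star V) z) = z := fun z => by
    have h := (Unitary.mem_iff.mp hV).2
    calc V ((star V) z) = (V * star V) z := rfl
    _ = z := by rw [h]; rfl
  have hUsU : ∀ z, (star U) (U z) = z := fun z => by
    have h := (Unitary.mem_iff.mp hU).1
    calc (star U) (U z) = (star U * U) z := rfl
    _ = z := by rw [h]; rfl
  have hUn : ∀ z, ‖U z‖ = ‖z‖ := fun z => ContinuousLinearMap.norm_map_of_mem_unitary hU z
  have hVsn : ∀ z, ‖(star V) z‖ = ‖z‖ := fun z =>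
    ContinuousLinearMap.norm_map_of_mem_unitary (Unitary.star_mem hV) z
  have hUsn : ∀ z, ‖(star U) z‖ = ‖z‖ := fun z =>
    ContinuousLinearMap.norm_map_of_mem_unitary (Unitary.star_mem hU) z
  -- membership criterion
  have hmem : ∀ z : H, B z = (‖B‖ : ℂ) • z →
      z ∈ LinearMap.ker ((B - (‖B‖ : ℂ) • (1 : H →L[ℂ] H) : H →L[ℂ] H) : H →ₗ[ℂ] H) := fun z hz => by
    rw [LinearMap.mem_ker]
    simp [ContinuousLinearMap.sub_apply, ContinuousLinearMap.smul_apply, hz]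
  -- B x = ‖B‖ • x
  have hBx : B x = (‖B‖ : ℂ) • x := by
    have h := hxm
    rw [LinearMap.mem_ker] at h
    have h2 : B x - (‖B‖ : ℂ) • x = 0 := by
      simpa [ContinuousLinearMap.sub_apply, ContinuousLinearMap.smul_apply] using h
    exact sub_eq_zero.mp h2
  -- apply heq to x
  have happ : B (B x) = U (B ((star U) (V (B ((star V) x))))) := by
    have h := DFunLike.congr_fun heq x
    simpa [ContinuousLinearMap.mul_apply] using h
  have hBBx : B (B x) = ((‖B‖ : ℂ)^2) • x := by
    rw [hBx, map_smul, hBx, smul_smul, sq]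
  -- norm chain
  have hnormBBx : ‖B (B x)‖ = ‖B‖^2 := by
    rw [hBBx, norm_smul]
    simp [hx1, abs_of_nonneg (norm_nonneg B)]
  have hkey : ‖B ((star V) x)‖ = ‖B‖ := by
    have hle1 : ‖B ((star V) x)‖ ≤ ‖B‖ := by
      calc ‖B ((star V) x)‖ ≤ ‖B‖ * ‖(star V) x‖ := B.le_opNorm _
      _ = ‖B‖ := by rw [hVsn, hx1, mul_one]
    have hge : ‖B‖^2 ≤ ‖B‖ * ‖B ((star V) x)‖ := by
      calc ‖B‖^2 = ‖B (B x)‖ := hnormBBx.symm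
      _ = ‖U (B ((star U) (V (B ((star V) x)))))‖ := by rw [happ]
      _ = ‖B ((star U) (V (B ((star V) x))))‖ := hUn _
      _ ≤ ‖B‖ * ‖(star U) (V (B ((star V) x)))‖ := B.le_opNorm _
      _ = ‖B‖ * ‖B ((star V) x)‖ := by
          rw [hUsn, ContinuousLinearMap.norm_map_of_mem_unitary hV]
    nlinarith
  -- V* x is eigenvector
  have hBVx : B ((star V) x) = (‖B‖ : ℂ) • ((star V) x) :=
    aux_eq_case B hBsa hBpos hBnorm _ (by rw [hkey, hVsn, hx1, mul_one])
  -- plug back to get U* part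
  have hVB : V (B ((star V) x)) = (‖B‖ : ℂ) • x := by
    rw [hBVx, map_smul, hVsV]
  have hU2 : U (B ((star U) x)) = (‖B‖ : ℂ) • x := by
    have h : ((‖B‖ : ℂ)^2) • x = (‖B‖ : ℂ) • U (B ((star U) x)) := by
      rw [← hBBx, happ, hVB, map_smul, map_smul, map_smul]
    have hne : (‖B‖ : ℂ) ≠ 0 := by
      simpa using ne_of_gt hBnorm
    have h2 : (‖B‖ : ℂ) • ((‖B‖ : ℂ) • x) = (‖B‖ : ℂ) • U (B ((star U) x)) := by
      rw [← h, smul_smul, sq]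
    exact (smul_right_injective H hne h2).symm
  have hBUx : B ((star U) x) = (‖B‖ : ℂ) • ((star U) x) := by
    have := congrArg (⇑(star U)) hU2
    rw [hUsU] at this
    rw [this, map_smul]
  refine ⟨hkey, ?_, hmem _ hBVx, hmem _ hBUx⟩
  rw [hBUx, norm_smul, hUsn, hx1]
  simp [abs_of_nonneg (norm_nonneg B)]
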